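/- Let k be a field and H a bialgebra over k with comultiplication Δ(h) = Σ h_{(1)} ⊗ h_{(2)}, counit ε, and dual space H*. Endow H* with the multiplication (l * l')(x) := Σ l(x_{(2)}) l'(x_{(1)}) (which is associative with unit ε). Define a bilinear multiplication on H* ⊗ H by (l ⊗ h)(l' ⊗ h') := Σ_{(h)} (l * (x ↦ l'(x·h_{(2)}))) ⊗ h_{(1)}h'. Then this multiplication is associative with two-sided unit ε ⊗ 1; the resulting unital associative algebra is the Heisenberg-double-type braided tensor product H* ⊗_{σ_bi} H. -/

import Mathlib

open TensorProduct

variable (k : Type*) [Field k]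

/-- The multiplication of the twisted (braided) tensor product `Q ⊗_ξ P`. -/
noncomputable def twistMul {P Q : Type*} [AddCommGroup P] [Module k P]
    [AddCommGroup Q] [Module k Q]
    (μQ : Q ⊗[k] Q →ₗ[k] Q) (μP : P ⊗[k] P →ₗ[k] P)
    (ξ : P ⊗[k] Q →ₗ[k] Q ⊗[k] P) :
    (Q ⊗[k] P) ⊗[k] (Q ⊗[k] P) →ₗ[k] Q ⊗[k] P :=
  (μQ.rTensor P)
    ∘ₗ (TensorProduct.assoc k Q Q P).symm.toLinearMap
    ∘ₗ (LinearMap.lTensor Q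
          ((μP.lTensor Q)
            ∘ₗ (TensorProduct.assoc k Q P P).toLinearMap
            ∘ₗ (ξ.rTensor P)
            ∘ₗ (TensorProduct.assoc k P Q P).symm.toLinearMap))
    ∘ₗ (TensorProduct.assoc k Q P (Q ⊗[k] P)).toLinearMap

variable (H : Type*) [Ring H] [Bialgebra k H]

/-- The bilinear contraction `H ⊗ H* → H*`, `h ⊗ l ↦ (x ↦ l (x * h))`. -/
noncomputable def rightMulDual : H ⊗[k] Module.Dual k H →ₗ[k] Module.Dual k H :=
  TensorProduct.lift
    ((LinearMap.llcomp k H H k).flip ∘ₗ (LinearMap.mul k H).flip)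

/-- The braiding `σ_bi : H ⊗ H* → H* ⊗ H`,
`h ⊗ l ↦ Σ (x ↦ l (x · h₍₂₎)) ⊗ h₍₁₎` (Sweedler notation). -/
noncomputable def sigmaBi : H ⊗[k] Module.Dual k H →ₗ[k] Module.Dual k H ⊗[k] H :=
  (TensorProduct.comm k H (Module.Dual k H)).toLinearMap
    ∘ₗ (LinearMap.lTensor H (rightMulDual k H))
    ∘ₗ (TensorProduct.assoc k H H (Module.Dual k H)).toLinearMap
    ∘ₗ ((Coalgebra.comul (R := k) (A := H)).rTensor (Module.Dual k H))

/-- The convolution-type multiplication on `H*` dual to `Δ` via the rainbow pairing: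
`(l * l')(x) = Σ l(x₍₂₎) l'(x₍₁₎)`. -/
noncomputable def convMul : Module.Dual k H ⊗[k] Module.Dual k H →ₗ[k] Module.Dual k H :=
  (LinearMap.llcomp k H (k ⊗[k] k) k (LinearMap.mul' k k))
    ∘ₗ (LinearMap.lcomp k (k ⊗[k] k) (Coalgebra.comul (R := k) (A := H)))
    ∘ₗ (TensorProduct.homTensorHomMap (RingHom.id k) H H k k)
    ∘ₗ (TensorProduct.comm k (Module.Dual k H) (Module.Dual k H)).toLinearMap

/-- The Heisenberg-double-type multiplication on `H* ⊗ H`: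
`(l ⊗ h)(l' ⊗ h') = Σ (l * (x ↦ l'(x · h₍₂₎))) ⊗ h₍₁₎ h'`. -/
noncomputable def heisMul :
    (Module.Dual k H ⊗[k] H) ⊗[k] (Module.Dual k H ⊗[k] H)
      →ₗ[k] Module.Dual k H ⊗[k] H :=
  twistMul k (convMul k H) (LinearMap.mul' k H) (sigmaBi k H)

-- ===================== auxiliary development =====================

@[simp] lemma rightMulDual_tmul (h : H) (l : Module.Dual k H) (x : H) :
    rightMulDual k H (h ⊗ₜ[k] l) x = l (x * h) := rfl

@[simp] lemma convMul_tmul_apply (l l' : Module.Dual k H) (x : H) :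
    convMul k H (l ⊗ₜ[k] l') x
      = LinearMap.mul' k k (TensorProduct.map l' l (Coalgebra.comul (R := k) x)) := rfl

noncomputable def Aop (l l' : Module.Dual k H) : H →ₗ[k] Module.Dual k H :=
  convMul k H ∘ₗ TensorProduct.mk k (Module.Dual k H) (Module.Dual k H) l
    ∘ₗ rightMulDual k H ∘ₗ (TensorProduct.mk k H (Module.Dual k H)).flip l'

@[simp] lemma Aop_apply (l l' : Module.Dual k H) (b : H) :
    Aop k H l l' b = convMul k H (l ⊗ₜ[k] rightMulDual k H (b ⊗ₜ[k] l')) := rfl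

noncomputable def heisAux (l l' : Module.Dual k H) (h' : H) :
    H ⊗[k] H →ₗ[k] Module.Dual k H ⊗[k] H :=
  (TensorProduct.map (Aop k H l l') (LinearMap.mulRight k h'))
    ∘ₗ (TensorProduct.comm k H H).toLinearMap

@[simp] lemma heisAux_tmul (l l' : Module.Dual k H) (h' a b : H) :
    heisAux k H l l' h' (a ⊗ₜ[k] b) = Aop k H l l' b ⊗ₜ[k] (a * h') := rfl

noncomputable def sigmaAux (l : Module.Dual k H) :
    H ⊗[k] H →ₗ[k] Module.Dual k H ⊗[k] H :=
  (TensorProduct.comm k H (Module.Dual k H)).toLinearMap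
    ∘ₗ (LinearMap.lTensor H (rightMulDual k H))
    ∘ₗ (TensorProduct.assoc k H H (Module.Dual k H)).toLinearMap
    ∘ₗ ((TensorProduct.mk k (H ⊗[k] H) (Module.Dual k H)).flip l)

@[simp] lemma sigmaAux_tmul (l : Module.Dual k H) (a b : H) :
    sigmaAux k H l (a ⊗ₜ[k] b) = rightMulDual k H (b ⊗ₜ[k] l) ⊗ₜ[k] a := rfl

lemma sigmaBi_tmul (h : H) (l : Module.Dual k H) :
    sigmaBi k H (h ⊗ₜ[k] l) = sigmaAux k H l (Coalgebra.comul (R := k) h) := by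
  simp only [sigmaBi, sigmaAux, LinearMap.comp_apply, LinearMap.rTensor_tmul,
    LinearEquiv.coe_coe, TensorProduct.mk_apply, LinearMap.flip_apply]

lemma heisMul_tmul (l l' : Module.Dual k H) (h h' : H) :
    heisMul k H ((l ⊗ₜ[k] h) ⊗ₜ[k] (l' ⊗ₜ[k] h'))
      = heisAux k H l l' h' (Coalgebra.comul (R := k) h) := by
  simp only [heisMul, twistMul, LinearMap.comp_apply, LinearEquiv.coe_coe,
    TensorProduct.assoc_tmul, TensorProduct.assoc_symm_tmul, LinearMap.lTensor_tmul,
    LinearMap.rTensor_tmul, sigmaBi_tmul]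
  generalize Coalgebra.comul (R := k) h = t
  induction t using TensorProduct.induction_on with
  | zero => simp only [LinearMap.map_zero, LinearEquiv.map_zero, TensorProduct.zero_tmul,
      TensorProduct.tmul_zero]
  | tmul a b => simp
  | add t₁ t₂ ih₁ ih₂ =>
    simp only [LinearMap.map_add, LinearEquiv.map_add, TensorProduct.add_tmul, TensorProduct.tmul_add,
      ih₁, ih₂]

lemma convMul_counit_left (l : Module.Dual k H) :
    convMul k H ((Coalgebra.counit (R := k) (A := H)) ⊗ₜ[k] l) = l := by
  apply LinearMap.ext; intro x
  have key : ∀ t : H ⊗[k] H,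
      LinearMap.mul' k k (TensorProduct.map l (Coalgebra.counit (R := k) (A := H)) t)
        = l (TensorProduct.rid k H
            ((Coalgebra.counit (R := k) (A := H)).lTensor H t)) := by
    intro t
    induction t using TensorProduct.induction_on with
    | zero => simp
    | tmul a b => simp [TensorProduct.smul_tmul', mul_comm]
    | add t₁ t₂ ih₁ ih₂ => simp [ih₁, ih₂]
  simp [key, Coalgebra.lTensor_counit_comul]

lemma convMul_counit_right (l : Module.Dual k H) :
    convMul k H (l ⊗ₜ[k] (Coalgebra.counit (R := k) (A := H))) = l := by
  apply LinearMap.ext; intro x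
  have key : ∀ t : H ⊗[k] H,
      LinearMap.mul' k k (TensorProduct.map (Coalgebra.counit (R := k) (A := H)) l t)
        = l (TensorProduct.lid k H
            ((Coalgebra.counit (R := k) (A := H)).rTensor H t)) := by
    intro t
    induction t using TensorProduct.induction_on with
    | zero => simp
    | tmul a b => simp
    | add t₁ t₂ ih₁ ih₂ => simp [ih₁, ih₂]
  simp [key, Coalgebra.rTensor_counit_comul]

@[simp] lemma rightMulDual_one (l : Module.Dual k H) :
    rightMulDual k H ((1 : H) ⊗ₜ[k] l) = l := by
  apply LinearMap.ext; intro x; simp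

lemma rightMulDual_counit (b : H) :
    rightMulDual k H (b ⊗ₜ[k] (Coalgebra.counit (R := k) (A := H)))
      = Coalgebra.counit (R := k) (A := H) b • Coalgebra.counit (R := k) (A := H) := by
  apply LinearMap.ext; intro x
  simp [Bialgebra.counit_mul, mul_comm]

lemma rightMulDual_rightMulDual (u d : H) (l : Module.Dual k H) :
    rightMulDual k H (u ⊗ₜ[k] rightMulDual k H (d ⊗ₜ[k] l))
      = rightMulDual k H ((u * d) ⊗ₜ[k] l) := by
  apply LinearMap.ext; intro x; simp [mul_assoc]

lemma heisMul_one_left (z : Module.Dual k H ⊗[k] H) :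
    heisMul k H (((Coalgebra.counit (R := k) (A := H)) ⊗ₜ[k] (1 : H)) ⊗ₜ[k] z) = z := by
  induction z using TensorProduct.induction_on with
  | zero => simp only [TensorProduct.tmul_zero, LinearMap.map_zero]
  | tmul l' h' =>
    rw [heisMul_tmul]
    have h1 : Coalgebra.comul (R := k) (1 : H) = (1 : H) ⊗ₜ[k] (1 : H) := by
      simp [Algebra.TensorProduct.one_def]
    rw [h1, heisAux_tmul]
    simp [convMul_counit_left]
  | add z₁ z₂ ih₁ ih₂ =>
    simp only [TensorProduct.tmul_add, LinearMap.map_add, ih₁, ih₂]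

lemma heisMul_one_right (z : Module.Dual k H ⊗[k] H) :
    heisMul k H (z ⊗ₜ[k] ((Coalgebra.counit (R := k) (A := H)) ⊗ₜ[k] (1 : H))) = z := by
  induction z using TensorProduct.induction_on with
  | zero => simp only [TensorProduct.zero_tmul, LinearMap.map_zero]
  | tmul l h =>
    rw [heisMul_tmul]
    have key : ∀ t : H ⊗[k] H,
        heisAux k H l (Coalgebra.counit (R := k) (A := H)) 1 t
          = l ⊗ₜ[k] (TensorProduct.rid k H
              ((Coalgebra.counit (R := k) (A := H)).lTensor H t)) := by
      intro t
      induction t using TensorProduct.induction_on with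
      | zero => simp
      | tmul a b =>
        simp [rightMulDual_counit, convMul_counit_right, TensorProduct.tmul_smul,
          TensorProduct.smul_tmul]
      | add t₁ t₂ ih₁ ih₂ => simp [ih₁, ih₂, TensorProduct.tmul_add]
    rw [key, Coalgebra.lTensor_counit_comul]
    simp
  | add z₁ z₂ ih₁ ih₂ =>
    simp only [TensorProduct.add_tmul, LinearMap.map_add, ih₁, ih₂]

lemma convMul_assoc (a b c : Module.Dual k H) :
    convMul k H (convMul k H (a ⊗ₜ[k] b) ⊗ₜ[k] c)
      = convMul k H (a ⊗ₜ[k] convMul k H (b ⊗ₜ[k] c)) := by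
  apply LinearMap.ext; intro x
  have h1 : ∀ t : H ⊗[k] H,
      LinearMap.mul' k k (TensorProduct.map c (convMul k H (a ⊗ₜ[k] b)) t)
        = LinearMap.mul' k k ((LinearMap.mul' k k).lTensor k
            (TensorProduct.map c (TensorProduct.map b a)
              ((Coalgebra.comul (R := k) (A := H)).lTensor H t))) := by
    intro t
    induction t using TensorProduct.induction_on with
    | zero => simp
    | tmul p q => simp
    | add t₁ t₂ ih₁ ih₂ => simp [ih₁, ih₂]
  have h2 : ∀ t : H ⊗[k] H,
      LinearMap.mul' k k (TensorProduct.map (convMul k H (b ⊗ₜ[k] c)) a t)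
        = LinearMap.mul' k k ((LinearMap.mul' k k).rTensor k
            (TensorProduct.map (TensorProduct.map c b) a
              ((Coalgebra.comul (R := k) (A := H)).rTensor H t))) := by
    intro t
    induction t using TensorProduct.induction_on with
    | zero => simp
    | tmul p q => simp
    | add t₁ t₂ ih₁ ih₂ => simp [ih₁, ih₂]
  have h3 : ∀ u : (H ⊗[k] H) ⊗[k] H,
      LinearMap.mul' k k ((LinearMap.mul' k k).rTensor k
          (TensorProduct.map (TensorProduct.map c b) a u))
        = LinearMap.mul' k k ((LinearMap.mul' k k).lTensor k
            (TensorProduct.map c (TensorProduct.map b a)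
              (TensorProduct.assoc k H H H u))) := by
    intro u
    induction u using TensorProduct.induction_on with
    | zero => simp only [LinearMap.map_zero, LinearEquiv.map_zero]
    | tmul s r =>
      induction s using TensorProduct.induction_on with
      | zero => simp only [TensorProduct.zero_tmul, LinearMap.map_zero, LinearEquiv.map_zero]
      | tmul p q => simp [mul_assoc]
      | add s₁ s₂ ih₁ ih₂ =>
        simp only [TensorProduct.add_tmul, LinearMap.map_add, LinearEquiv.map_add, ih₁, ih₂]
    | add u₁ u₂ ih₁ ih₂ =>
      simp only [LinearMap.map_add, LinearEquiv.map_add, ih₁, ih₂]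
  rw [convMul_tmul_apply, convMul_tmul_apply, h1, h2,
    ← Coalgebra.coassoc_apply, h3]

noncomputable def lamAux (a b : Module.Dual k H) : H ⊗[k] H →ₗ[k] Module.Dual k H :=
  convMul k H
    ∘ₗ TensorProduct.map (rightMulDual k H ∘ₗ (TensorProduct.mk k H (Module.Dual k H)).flip a)
        (rightMulDual k H ∘ₗ (TensorProduct.mk k H (Module.Dual k H)).flip b)
    ∘ₗ (TensorProduct.comm k H H).toLinearMap

@[simp] lemma lamAux_tmul (a b : Module.Dual k H) (u v : H) :
    lamAux k H a b (u ⊗ₜ[k] v)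
      = convMul k H (rightMulDual k H (v ⊗ₜ[k] a) ⊗ₜ[k] rightMulDual k H (u ⊗ₜ[k] b)) := rfl

lemma rightMulDual_convMul (a b : Module.Dual k H) (g : H) :
    rightMulDual k H (g ⊗ₜ[k] convMul k H (a ⊗ₜ[k] b))
      = lamAux k H a b (Coalgebra.comul (R := k) g) := by
  apply LinearMap.ext; intro x
  have gen : ∀ s : H ⊗[k] H,
      LinearMap.mul' k k (TensorProduct.map b a ((Coalgebra.comul (R := k) x) * s))
        = lamAux k H a b s x := by
    intro s
    induction s using TensorProduct.induction_on with
    | zero => simp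
    | tmul u v =>
      have sub : ∀ t : H ⊗[k] H,
          LinearMap.mul' k k (TensorProduct.map b a (t * (u ⊗ₜ[k] v)))
            = LinearMap.mul' k k (TensorProduct.map (rightMulDual k H (u ⊗ₜ[k] b))
                (rightMulDual k H (v ⊗ₜ[k] a)) t) := by
        intro t
        induction t using TensorProduct.induction_on with
        | zero => simp
        | tmul p q => simp [Algebra.TensorProduct.tmul_mul_tmul]
        | add t₁ t₂ ih₁ ih₂ => simp [add_mul, ih₁, ih₂]
      simp [sub]
    | add s₁ s₂ ih₁ ih₂ => simp [mul_add, ih₁, ih₂]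
  have lhs : rightMulDual k H (g ⊗ₜ[k] convMul k H (a ⊗ₜ[k] b)) x
      = LinearMap.mul' k k (TensorProduct.map b a
          ((Coalgebra.comul (R := k) x) * (Coalgebra.comul (R := k) g))) := by
    rw [rightMulDual_tmul, convMul_tmul_apply, ← Bialgebra.comul_mul]
  rw [lhs, gen]

noncomputable def Kmap (l l' l'' : Module.Dual k H) : H ⊗[k] H →ₗ[k] Module.Dual k H :=
  convMul k H
    ∘ₗ TensorProduct.map (Aop k H l l')
        (rightMulDual k H ∘ₗ (TensorProduct.mk k H (Module.Dual k H)).flip l'')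
    ∘ₗ (TensorProduct.comm k H H).toLinearMap

@[simp] lemma Kmap_tmul (l l' l'' : Module.Dual k H) (y b : H) :
    Kmap k H l l' l'' (y ⊗ₜ[k] b)
      = convMul k H (Aop k H l l' b ⊗ₜ[k] rightMulDual k H (y ⊗ₜ[k] l'')) := rfl

noncomputable def Gmap (l l' l'' : Module.Dual k H) (h'' : H) :
    (H ⊗[k] H) ⊗[k] H →ₗ[k] Module.Dual k H ⊗[k] H :=
  TensorProduct.map (Kmap k H l l' l'') (LinearMap.mulRight k h'')
    ∘ₗ (TensorProduct.comm k H (H ⊗[k] H)).toLinearMap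
    ∘ₗ (TensorProduct.assoc k H H H).toLinearMap

lemma Gmap_eq_heisAux (l l' l'' : Module.Dual k H) (h'' : H) (t : H ⊗[k] H) (b : H) :
    Gmap k H l l' l'' h'' (t ⊗ₜ[k] b) = heisAux k H (Aop k H l l' b) l'' h'' t := by
  induction t using TensorProduct.induction_on with
  | zero => simp only [TensorProduct.zero_tmul, LinearMap.map_zero]
  | tmul x y => rfl
  | add t₁ t₂ ih₁ ih₂ =>
    simp only [TensorProduct.add_tmul, LinearMap.map_add, ih₁, ih₂]

noncomputable def NL (l l' l'' : Module.Dual k H) (h'' : H) (s : H ⊗[k] H) :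
    (H ⊗[k] H) ⊗[k] H →ₗ[k] Module.Dual k H ⊗[k] H :=
  Gmap k H l l' l'' h'' ∘ₗ ((LinearMap.mul k (H ⊗[k] H)).flip s).rTensor H

noncomputable def Fmap (l l' l'' : Module.Dual k H) :
    (H ⊗[k] H) ⊗[k] H →ₗ[k] Module.Dual k H :=
  convMul k H
    ∘ₗ TensorProduct.mk k (Module.Dual k H) (Module.Dual k H) l
    ∘ₗ lamAux k H l' l''
    ∘ₗ (LinearMap.mul' k H).rTensor H
    ∘ₗ (TensorProduct.assoc k H H H).symm.toLinearMap
    ∘ₗ (LinearMap.lTensor H (TensorProduct.comm k H H).toLinearMap)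
    ∘ₗ (TensorProduct.assoc k H H H).toLinearMap

lemma Fmap_eq (l l' l'' : Module.Dual k H) (w : H ⊗[k] H) (d : H) :
    Fmap k H l l' l'' (w ⊗ₜ[k] d)
      = convMul k H (l ⊗ₜ[k]
          lamAux k H l' (rightMulDual k H (d ⊗ₜ[k] l'')) w) := by
  induction w using TensorProduct.induction_on with
  | zero => simp only [TensorProduct.zero_tmul, LinearMap.map_zero,
      TensorProduct.tmul_zero]
  | tmul u v =>
    have : Fmap k H l l' l'' ((u ⊗ₜ[k] v) ⊗ₜ[k] d)
        = convMul k H (l ⊗ₜ[k] lamAux k H l' l'' ((u * d) ⊗ₜ[k] v)) := rfl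
    rw [this]
    simp [rightMulDual_rightMulDual]
  | add w₁ w₂ ih₁ ih₂ =>
    simp only [TensorProduct.add_tmul, LinearMap.map_add, ih₁, ih₂,
      TensorProduct.tmul_add]

noncomputable def NR (l l' l'' : Module.Dual k H) (h'' : H) (s : H ⊗[k] H) :
    H ⊗[k] (H ⊗[k] H) →ₗ[k] Module.Dual k H ⊗[k] H :=
  TensorProduct.map (Fmap k H l l' l'') (LinearMap.mulRight k h'' ∘ₗ LinearMap.mul' k H)
    ∘ₗ (TensorProduct.comm k (H ⊗[k] H) ((H ⊗[k] H) ⊗[k] H)).toLinearMap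
    ∘ₗ (TensorProduct.tensorTensorTensorComm k H (H ⊗[k] H) H H).toLinearMap
    ∘ₗ ((TensorProduct.mk k (H ⊗[k] (H ⊗[k] H)) (H ⊗[k] H)).flip s)

lemma NR_tmul (l l' l'' : Module.Dual k H) (h'' : H) (c d p : H) (w : H ⊗[k] H) :
    NR k H l l' l'' h'' (c ⊗ₜ[k] d) (p ⊗ₜ[k] w)
      = Fmap k H l l' l'' (w ⊗ₜ[k] d) ⊗ₜ[k] (p * c * h'') := rfl

lemma NL_zero (l l' l'' : Module.Dual k H) (h'' : H) :
    NL k H l l' l'' h'' 0 = 0 := by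
  unfold NL
  rw [map_zero, LinearMap.rTensor_zero, LinearMap.comp_zero]

lemma NL_add (l l' l'' : Module.Dual k H) (h'' : H) (s₁ s₂ : H ⊗[k] H) :
    NL k H l l' l'' h'' (s₁ + s₂) = NL k H l l' l'' h'' s₁ + NL k H l l' l'' h'' s₂ := by
  unfold NL
  rw [map_add, LinearMap.rTensor_add, LinearMap.comp_add]

lemma NR_zero (l l' l'' : Module.Dual k H) (h'' : H) :
    NR k H l l' l'' h'' 0 = 0 := by
  unfold NR
  rw [map_zero, LinearMap.comp_zero, LinearMap.comp_zero, LinearMap.comp_zero]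

lemma NR_add (l l' l'' : Module.Dual k H) (h'' : H) (s₁ s₂ : H ⊗[k] H) :
    NR k H l l' l'' h'' (s₁ + s₂) = NR k H l l' l'' h'' s₁ + NR k H l l' l'' h'' s₂ := by
  unfold NR
  rw [map_add, LinearMap.comp_add, LinearMap.comp_add, LinearMap.comp_add]

lemma hL (l l' l'' : Module.Dual k H) (h' h'' : H) (T : H ⊗[k] H) :
    heisMul k H (heisAux k H l l' h' T ⊗ₜ[k] (l'' ⊗ₜ[k] h''))
      = NL k H l l' l'' h'' (Coalgebra.comul (R := k) h')
          ((Coalgebra.comul (R := k) (A := H)).rTensor H T) := by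
  induction T using TensorProduct.induction_on with
  | zero => simp only [LinearMap.map_zero, TensorProduct.zero_tmul]
  | tmul a b =>
    rw [heisAux_tmul, heisMul_tmul, LinearMap.rTensor_tmul]
    have : NL k H l l' l'' h'' (Coalgebra.comul (R := k) h')
        ((Coalgebra.comul (R := k) a) ⊗ₜ[k] b)
        = Gmap k H l l' l'' h''
            (((Coalgebra.comul (R := k) a) * (Coalgebra.comul (R := k) h')) ⊗ₜ[k] b) := rfl
    rw [this, Gmap_eq_heisAux, Bialgebra.comul_mul]
  | add T₁ T₂ ih₁ ih₂ =>
    simp only [LinearMap.map_add, TensorProduct.add_tmul, ih₁, ih₂]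

lemma hAA (l l' l'' : Module.Dual k H) (h'' c d : H) (T : H ⊗[k] H) :
    heisAux k H l (Aop k H l' l'' d) (c * h'') T
      = NR k H l l' l'' h'' (c ⊗ₜ[k] d) ((Coalgebra.comul (R := k) (A := H)).lTensor H T) := by
  induction T using TensorProduct.induction_on with
  | zero => simp only [LinearMap.map_zero]
  | tmul p q =>
    rw [heisAux_tmul, LinearMap.lTensor_tmul, NR_tmul, Fmap_eq]
    rw [Aop_apply, Aop_apply, rightMulDual_convMul, mul_assoc]
  | add T₁ T₂ ih₁ ih₂ =>
    simp only [LinearMap.map_add, ih₁, ih₂]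

lemma hR (l l' l'' : Module.Dual k H) (h h'' : H) (S : H ⊗[k] H) :
    heisMul k H ((l ⊗ₜ[k] h) ⊗ₜ[k] heisAux k H l' l'' h'' S)
      = NR k H l l' l'' h'' S
          ((Coalgebra.comul (R := k) (A := H)).lTensor H (Coalgebra.comul (R := k) h)) := by
  induction S using TensorProduct.induction_on with
  | zero => simp only [LinearMap.map_zero, TensorProduct.tmul_zero, NR_zero,
      LinearMap.zero_apply]
  | tmul c d =>
    rw [heisAux_tmul, heisMul_tmul, hAA]
  | add S₁ S₂ ih₁ ih₂ =>
    simp only [LinearMap.map_add, TensorProduct.tmul_add, ih₁, ih₂, NR_add,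
      LinearMap.add_apply]

lemma main_cmp (l l' l'' : Module.Dual k H) (h'' : H) (s : H ⊗[k] H)
    (u : (H ⊗[k] H) ⊗[k] H) :
    NL k H l l' l'' h'' s u
      = NR k H l l' l'' h'' s (TensorProduct.assoc k H H H u) := by
  induction u using TensorProduct.induction_on with
  | zero => simp only [LinearMap.map_zero, LinearEquiv.map_zero]
  | tmul t z =>
    induction t using TensorProduct.induction_on with
    | zero => simp only [TensorProduct.zero_tmul, LinearMap.map_zero, LinearEquiv.map_zero]
    | tmul x y =>
      induction s using TensorProduct.induction_on with
      | zero => simp only [NL_zero, NR_zero, LinearMap.zero_apply]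
      | tmul c d =>
        have e0 : NL k H l l' l'' h'' (c ⊗ₜ[k] d) ((x ⊗ₜ[k] y) ⊗ₜ[k] z)
            = Gmap k H l l' l'' h'' (((x ⊗ₜ[k] y) * (c ⊗ₜ[k] d)) ⊗ₜ[k] z) := rfl
        have e1 : Gmap k H l l' l'' h'' (((x * c) ⊗ₜ[k] (y * d)) ⊗ₜ[k] z)
            = convMul k H (convMul k H (l ⊗ₜ[k] rightMulDual k H (z ⊗ₜ[k] l'))
                ⊗ₜ[k] rightMulDual k H ((y * d) ⊗ₜ[k] l'')) ⊗ₜ[k] (x * c * h'') := rfl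
        have e2 : NR k H l l' l'' h''  (c ⊗ₜ[k] d)
              (TensorProduct.assoc k H H H ((x ⊗ₜ[k] y) ⊗ₜ[k] z))
            = convMul k H (l ⊗ₜ[k] convMul k H (rightMulDual k H (z ⊗ₜ[k] l')
                ⊗ₜ[k] rightMulDual k H ((y * d) ⊗ₜ[k] l''))) ⊗ₜ[k] (x * c * h'') := rfl
        rw [e0, Algebra.TensorProduct.tmul_mul_tmul, e1, e2, convMul_assoc]
      | add s₁ s₂ ih₁ ih₂ =>
        simp only [NL_add, NR_add, LinearMap.add_apply, ih₁, ih₂]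
    | add t₁ t₂ ih₁ ih₂ =>
      simp only [TensorProduct.add_tmul, LinearMap.map_add, LinearEquiv.map_add, ih₁, ih₂]
  | add u₁ u₂ ih₁ ih₂ =>
    simp only [LinearMap.map_add, LinearEquiv.map_add, ih₁, ih₂]

lemma heisMul_assoc_pure (l l' l'' : Module.Dual k H) (h h' h'' : H) :
    heisMul k H (heisMul k H ((l ⊗ₜ[k] h) ⊗ₜ[k] (l' ⊗ₜ[k] h')) ⊗ₜ[k] (l'' ⊗ₜ[k] h''))
      = heisMul k H ((l ⊗ₜ[k] h) ⊗ₜ[k] heisMul k H ((l' ⊗ₜ[k] h') ⊗ₜ[k] (l'' ⊗ₜ[k] h''))) := by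
  rw [heisMul_tmul k H l l' h h', heisMul_tmul k H l' l'' h' h'', hL, hR,
    ← Coalgebra.coassoc_apply, main_cmp]

/-- For a bialgebra `H`, the Heisenberg-double-type multiplication on `H* ⊗ H` is
associative with two-sided unit `ε ⊗ 1`. -/
theorem heisenberg_double_assoc_unital :
    (heisMul k H ∘ₗ (heisMul k H).rTensor (Module.Dual k H ⊗[k] H)
      = heisMul k H ∘ₗ (heisMul k H).lTensor (Module.Dual k H ⊗[k] H)
        ∘ₗ (TensorProduct.assoc k (Module.Dual k H ⊗[k] H) (Module.Dual k H ⊗[k] H)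
            (Module.Dual k H ⊗[k] H)).toLinearMap)
    ∧ (∀ z : Module.Dual k H ⊗[k] H,
        heisMul k H (((Coalgebra.counit (R := k) (A := H)) ⊗ₜ[k] (1 : H)) ⊗ₜ[k] z) = z)
    ∧ (∀ z : Module.Dual k H ⊗[k] H,
        heisMul k H (z ⊗ₜ[k] ((Coalgebra.counit (R := k) (A := H)) ⊗ₜ[k] (1 : H))) = z) := by
  refine ⟨?_, heisMul_one_left k H, heisMul_one_right k H⟩
  apply TensorProduct.ext_threefold
  intro x y z
  simp only [LinearMap.comp_apply, LinearMap.rTensor_tmul, LinearMap.lTensor_tmul,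
    LinearEquiv.coe_coe, TensorProduct.assoc_tmul]
  induction x using TensorProduct.induction_on with
  | zero => simp only [TensorProduct.zero_tmul, LinearMap.map_zero]
  | tmul l h =>
    induction y using TensorProduct.induction_on with
    | zero => simp only [TensorProduct.zero_tmul, TensorProduct.tmul_zero,
        LinearMap.map_zero]
    | tmul l' h' =>
      induction z using TensorProduct.induction_on with
      | zero => simp only [TensorProduct.tmul_zero, LinearMap.map_zero]
      | tmul l'' h'' => exact heisMul_assoc_pure k H l l' l'' h h' h''
      | add z₁ z₂ ih₁ ih₂ =>
        simp only [TensorProduct.tmul_add, LinearMap.map_add, ih₁, ih₂]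
    | add y₁ y₂ ih₁ ih₂ =>
      simp only [TensorProduct.tmul_add, TensorProduct.add_tmul, LinearMap.map_add,
        ih₁, ih₂]
  | add x₁ x₂ ih₁ ih₂ =>
    simp only [TensorProduct.add_tmul, LinearMap.map_add, ih₁, ih₂]
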